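/- Let G be a finite simple graph, let tw, c̃, d be natural numbers with c̃ ≥ 1 and d ≥ 2, and let Z be a set of vertices with |Z| = d·c̃ and |Z| > 24·tw such that the induced subgraph G[Z] has at most tw·|Z| edges. Let Z1, Z2 be disjoint sets with Z1 ∪ Z2 = Z, |Z1| = ⌊d/2⌋·c̃ and |Z2| = ⌈d/2⌉·c̃. Then the number of edges of G with one endpoint in Z1 and one in Z2 is strictly less than the number of non-adjacent pairs (v,w) with v ∈ Z1 and w ∈ Z2; equivalently, 2·e(Z1,Z2) < |Z1|·|Z2|. -/

import Mathlib

open Finset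

open scoped Classical

noncomputable section

variable {V : Type*}

/-- Two vertices lie in the same cluster of the clustering `P`. -/
def sameCluster [Fintype V] (P : Finpartition (Finset.univ : Finset V)) (v w : V) : Prop :=
  ∃ t ∈ P.parts, v ∈ t ∧ w ∈ t

/-- The cost of a clustering of the vertex set of `G`: the number of edges of `G` with
endpoints in different clusters plus the number of non-adjacent (unordered) pairs of distinct
vertices lying in the same cluster. (Ordered pairs are counted and divided by two.) -/
def clusterCost [Fintype V] (G : SimpleGraph V)
    (P : Finpartition (Finset.univ : Finset V)) : ℕ :=
  (Finset.univ.offDiag.filter fun p : V × V => G.Adj p.1 p.2 ∧ ¬ sameCluster P p.1 p.2).card / 2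
    + (Finset.univ.offDiag.filter fun p : V × V =>
        ¬ G.Adj p.1 p.2 ∧ sameCluster P p.1 p.2).card / 2

/-- The number of edges of `G` with both endpoints in `S`, i.e. the number of edges of the
induced subgraph `G[S]`. (Ordered pairs are counted and divided by two.) -/
def edgesIn (G : SimpleGraph V) (S : Finset V) : ℕ :=
  (S.offDiag.filter fun p : V × V => G.Adj p.1 p.2).card / 2

/-- The number of edges of `G` with one endpoint in `A` and the other in `B`
(for disjoint `A`, `B` this is the usual count of edges between `A` and `B`). -/
def edgesBetween (G : SimpleGraph V) (A B : Finset V) : ℕ :=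
  ((A ×ˢ B).filter fun p : V × V => G.Adj p.1 p.2).card

/-- For a set `Z` of size `d * c̃ > 24 * tw` (with `c̃ ≥ 1`, `d ≥ 2`) inducing
at most `tw * |Z|` edges, any balanced fair-sized split `Z = Z1 ∪ Z2` with
`|Z1| = ⌊d/2⌋ * c̃`, `|Z2| = ⌈d/2⌉ * c̃` cuts strictly fewer edges than the number of
non-adjacent pairs between `Z1` and `Z2`, i.e. `2 * e(Z1,Z2) < |Z1| * |Z2|`. -/
theorem two_mul_edgesBetween_lt_of_balanced_split
    {V : Type*} [Fintype V] (G : SimpleGraph V) (tw ctilde d : ℕ)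
    (hct : 1 ≤ ctilde) (hd : 2 ≤ d)
    (Z Z1 Z2 : Finset V)
    (hZcard : Z.card = d * ctilde) (hZbig : 24 * tw < Z.card)
    (hdens : edgesIn G Z ≤ tw * Z.card)
    (hdisj : Disjoint Z1 Z2) (hunion : Z1 ∪ Z2 = Z)
    (h1 : Z1.card = (d / 2) * ctilde) (h2 : Z2.card = ((d + 1) / 2) * ctilde) :
    2 * edgesBetween G Z1 Z2 < Z1.card * Z2.card := by
  classical
  set f : V × V → Prop := fun p => G.Adj p.1 p.2 with hf
  set A : Finset (V × V) := (Z1 ×ˢ Z2).filter fun p => G.Adj p.1 p.2 with hA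
  set B : Finset (V × V) := (Z2 ×ˢ Z1).filter fun p => G.Adj p.1 p.2 with hB
  have hcardAB : A.card = B.card := by
    have himg : A.image Prod.swap = B := by
      ext p
      simp only [hA, hB, Finset.mem_image, Finset.mem_filter, Finset.mem_product]
      constructor
      · rintro ⟨q, ⟨⟨hq1, hq2⟩, hadj⟩, rfl⟩
        exact ⟨⟨hq2, hq1⟩, hadj.symm⟩
      · rintro ⟨⟨hp1, hp2⟩, hadj⟩
        exact ⟨p.swap, ⟨⟨hp2, hp1⟩, hadj.symm⟩, Prod.swap_swap p⟩
    calc A.card = (A.image Prod.swap).card :=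
          (Finset.card_image_of_injective _ Prod.swap_injective).symm
      _ = B.card := by rw [himg]
  have hsubZ1 : Z1 ⊆ Z := hunion ▸ Finset.subset_union_left
  have hsubZ2 : Z2 ⊆ Z := hunion ▸ Finset.subset_union_right
  have hABdisj : Disjoint A B := by
    rw [Finset.disjoint_left]
    rintro p hpA hpB
    simp only [hA, hB, Finset.mem_filter, Finset.mem_product] at hpA hpB
    exact Finset.disjoint_left.mp hdisj hpA.1.1 hpB.1.1
  have hsub : A ∪ B ⊆ Z.offDiag.filter fun p => G.Adj p.1 p.2 := by
    intro p hp
    rcases Finset.mem_union.mp hp with h | h <;>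
      simp only [hA, hB, Finset.mem_filter, Finset.mem_product] at h <;>
      simp only [Finset.mem_filter, Finset.mem_offDiag]
    · exact ⟨⟨hsubZ1 h.1.1, hsubZ2 h.1.2, G.ne_of_adj h.2⟩, h.2⟩
    · exact ⟨⟨hsubZ2 h.1.1, hsubZ1 h.1.2, G.ne_of_adj h.2⟩, h.2⟩
  have hkey : 2 * edgesBetween G Z1 Z2 ≤
      (Z.offDiag.filter fun p : V × V => G.Adj p.1 p.2).card := by
    have : (A ∪ B).card = 2 * edgesBetween G Z1 Z2 := by
      rw [Finset.card_union_of_disjoint hABdisj, ← hcardAB, edgesBetween]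
      ring_nf
      rfl
    rw [← this]
    exact Finset.card_le_card hsub
  have hEB : edgesBetween G Z1 Z2 ≤ edgesIn G Z := by
    rw [edgesIn, Nat.le_div_iff_mul_le (by norm_num)]
    omega
  have hEB2 : edgesBetween G Z1 Z2 ≤ tw * (d * ctilde) := by
    calc edgesBetween G Z1 Z2 ≤ edgesIn G Z := hEB
      _ ≤ tw * Z.card := hdens
      _ = tw * (d * ctilde) := by rw [hZcard]
  rw [h1, h2]
  set a := d / 2 with ha
  set b := (d + 1) / 2 with hb
  have hab : a + b = d := by omega
  have hba : a ≤ b ∧ b ≤ a + 1 ∧ 1 ≤ a := by omega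
  have hdsq : d * d ≤ 12 * (a * b) := by
    obtain ⟨h1', h2', h3'⟩ := hba
    nlinarith [hab]
  have hZb : 24 * tw < d * ctilde := by rw [hZcard] at hZbig; exact hZbig
  nlinarith [hEB2, hZb, hdsq, hct, mul_le_mul_left hdsq (ctilde * ctilde)]


end
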